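/- Let M be an n×n real positive semidefinite matrix and S an n×n real positive definite matrix. Then Tr(S⁻¹ M) + Tr(S) ≥ 2·Tr(√M), where √M is the positive semidefinite square root of M. -/

import Mathlib

open Matrix

/-- The positive semidefinite square root, as `Matrix.PosSemidef.sqrt` was defined in the older Mathlib. -/
noncomputable def Matrix.PosSemidef.sqrt {n : Type*} [Fintype n] [DecidableEq n]
    {A : Matrix n n ℝ} (hA : A.PosSemidef) : Matrix n n ℝ :=
  hA.1.eigenvectorUnitary.1 * diagonal ((↑) ∘ (√·) ∘ hA.1.eigenvalues) *
    (star hA.1.eigenvectorUnitary : Matrix n n ℝ)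

lemma psd_trace_nonneg {n : ℕ} {A : Matrix (Fin n) (Fin n) ℝ} (hA : A.PosSemidef) :
    0 ≤ Matrix.trace A := by
  rw [Matrix.trace]
  apply Finset.sum_nonneg
  intro i _
  exact hA.diag_nonneg

theorem trace_inv_add_trace_ge (n : ℕ) (M S : Matrix (Fin n) (Fin n) ℝ)
    (hM : M.PosSemidef) (hS : S.PosDef) :
    2 * Matrix.trace hM.sqrt ≤ Matrix.trace (S⁻¹ * M) + Matrix.trace S := by
  set A := hM.sqrt with hA
  have hAH : A.IsHermitian := by
    have hD : (diagonal ((↑) ∘ (√·) ∘ hM.1.eigenvalues) : Matrix (Fin n) (Fin n) ℝ).PosSemidef :=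
      posSemidef_diagonal_iff.mpr (fun i => by simp [Real.sqrt_nonneg])
    have := (hD.mul_mul_conjTranspose_same
      (hM.1.eigenvectorUnitary : Matrix (Fin n) (Fin n) ℝ)).isHermitian
    rw [← star_eq_conjTranspose] at this
    exact this
  have hAA : A * A = M := by
    have hUU := Unitary.coe_star_mul_self hM.1.eigenvectorUnitary
    have h1 : A * A = (hM.1.eigenvectorUnitary : Matrix (Fin n) (Fin n) ℝ) *
        ((diagonal ((↑) ∘ (√·) ∘ hM.1.eigenvalues) : Matrix (Fin n) (Fin n) ℝ) *
          ((star hM.1.eigenvectorUnitary : Matrix (Fin n) (Fin n) ℝ) *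
            hM.1.eigenvectorUnitary.1) *
          (diagonal ((↑) ∘ (√·) ∘ hM.1.eigenvalues) : Matrix (Fin n) (Fin n) ℝ)) *
        (star hM.1.eigenvectorUnitary : Matrix (Fin n) (Fin n) ℝ) := by
      simp only [hA, Matrix.PosSemidef.sqrt, mul_assoc]
    conv_rhs => rw [hM.1.spectral_theorem, Unitary.conjStarAlgAut_apply]
    rw [h1, hUU, mul_one, diagonal_mul_diagonal]
    congr 2
    ext i j
    simp [diagonal_apply, Real.mul_self_sqrt (hM.eigenvalues_nonneg i)]
  have hB : (A - S)ᴴ = A - S := by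
    rw [conjTranspose_sub, hAH.eq, hS.isHermitian.eq]
  have hPSD : ((A - S)ᴴ * S⁻¹ * (A - S)).PosSemidef :=
    hS.inv.posSemidef.conjTranspose_mul_mul_same (A - S)
  have htr : 0 ≤ Matrix.trace ((A - S) * S⁻¹ * (A - S)) := by
    have := psd_trace_nonneg hPSD
    rwa [hB] at this
  have hdet : IsUnit S.det := hS.det_pos.ne'.isUnit
  have hSS : S⁻¹ * S = 1 := Matrix.nonsing_inv_mul S hdet
  have hSS' : S * S⁻¹ = 1 := Matrix.mul_nonsing_inv S hdet
  have hexp : (A - S) * S⁻¹ * (A - S) =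
      A * (S⁻¹ * A) - A * (S⁻¹ * S) - (S * S⁻¹) * A + (S * S⁻¹) * S := by
    noncomm_ring
  rw [hexp, hSS, hSS', mul_one, one_mul, one_mul] at htr
  have hcyc : Matrix.trace (A * (S⁻¹ * A)) = Matrix.trace (S⁻¹ * M) := by
    rw [← mul_assoc, Matrix.trace_mul_cycle, Matrix.trace_mul_cycle, mul_assoc, hAA]
  rw [Matrix.trace_add, Matrix.trace_sub, Matrix.trace_sub, hcyc] at htr
  linarith
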